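/- arXiv:1808.04020 — 2 statements merged into one kernel-verified Lean document; each statement's English description precedes it below -/
import Mathlib

section
/- Let F be a probability distribution on [θ̲, θ̄] with mean E[F], and let (c̃(N))_{N≥2} satisfy θ̲ < limsup_{N→∞} c̃(N) < E[F]. Then for every ε > 0 there exists N₀ such that for all N ≥ N₀, sup_{θ ∈ [θ̲,θ̄]} F^{*(N-1)}(N·c̃(N) - θ) ≤ F^{*(N-1)}(N·c̃(N) - θ̲) < ε. In particular the ex-post efficiency rule is incentive compatible for all sufficiently large N for any fixed news-utility parameters. -/
open Set MeasureTheory Filter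

open ProbabilityTheory

section Aux

variable {F : Measure ℝ} [IsProbabilityMeasure F]

lemma pi_map_eval (n : ℕ) (i : Fin n) :
    (Measure.pi (fun _ : Fin n => F)).map (fun ω => ω i) = F := by
  ext s hs
  rw [Measure.map_apply (measurable_pi_apply i) hs]
  have h1 : (fun ω : Fin n → ℝ => ω i) ⁻¹' s
      = Set.pi univ (Function.update (fun _ => univ) i s) := by
    classical
    exact Set.eval_preimage
  rw [h1, Measure.pi_pi]
  rw [Fintype.prod_eq_single i (fun j hj => by simp [Function.update_of_ne hj])]
  simp

lemma iIndep_eval (n : ℕ) :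
    iIndepFun (fun (i : Fin n) (ω : Fin n → ℝ) => ω i)
      (Measure.pi (fun _ : Fin n => F)) := by
  rw [iIndepFun_iff_measure_inter_preimage_eq_mul]
  intro S sets hsets
  classical
  have h1 : (⋂ i ∈ S, (fun ω : Fin n → ℝ => ω i) ⁻¹' sets i)
      = Set.pi univ (fun i => if i ∈ S then sets i else univ) := by
    ext ω
    simp only [Set.mem_iInter, Set.mem_preimage, Set.mem_pi, Set.mem_univ, true_implies]
    refine ⟨fun h i => ?_, fun h i hi => by simpa [hi] using h i⟩
    split_ifs with hi
    · exact h i hi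
    · trivial
  rw [h1, Measure.pi_pi]
  have h2 : ∀ i : Fin n, F (if i ∈ S then sets i else univ)
      = if i ∈ S then F (sets i) else 1 := by
    intro i; split <;> simp
  rw [Finset.prod_congr rfl fun i _ => h2 i, Finset.prod_ite_mem, Finset.univ_inter]
  refine Finset.prod_congr rfl fun i hi => ?_
  rw [← Measure.map_apply (measurable_pi_apply i) (hsets i hi), pi_map_eval]

lemma integral_eval (n : ℕ) (i : Fin n) (g : ℝ → ℝ) (hg : AEStronglyMeasurable g F) :
    ∫ ω, g (ω i) ∂(Measure.pi fun _ : Fin n => F) = ∫ θ, g θ ∂F := by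
  conv_rhs => rw [← pi_map_eval (F := F) n i]
  rw [integral_map (measurable_pi_apply i).aemeasurable (by rwa [pi_map_eval])]

lemma conv_tail_bound (tlo thi : ℝ) (htlo : 0 ≤ tlo) (hlt : tlo ≤ thi)
    (hsupp : ∀ᵐ θ ∂F, θ ∈ Icc tlo thi)
    (n : ℕ) (x : ℝ) (hx : x < n * (∫ θ, θ ∂F)) :
    (((Measure.pi (fun _ : Fin n => F)).map (fun ω => ∑ i, ω i)) (Iic x)).toReal
      ≤ n * (thi - tlo)^2 / (n * (∫ θ, θ ∂F) - x)^2 := by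
  set EF : ℝ := ∫ θ, θ ∂F with hEF
  set μ : Measure (Fin n → ℝ) := Measure.pi (fun _ : Fin n => F) with hμ
  have hth : 0 ≤ thi := le_trans htlo hlt
  set X : Fin n → (Fin n → ℝ) → ℝ := fun i ω => ω i with hX
  have hS : Measurable (fun ω : Fin n → ℝ => ∑ i, ω i) :=
    Finset.measurable_sum _ fun i _ => measurable_pi_apply i
  have hsum : (∑ i, X i) = fun ω : Fin n → ℝ => ∑ i, ω i := by
    funext ω; simp [hX]
  -- boundedness of coordinates
  have haei : ∀ i : Fin n, ∀ᵐ ω ∂μ, ω i ∈ Icc tlo thi := fun i =>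
    Measure.tendsto_eval_ae_ae.eventually hsupp
  have hmemX : ∀ i, MemLp (X i) 2 μ := by
    intro i
    refine MemLp.of_bound (measurable_pi_apply i).aestronglyMeasurable thi ?_
    filter_upwards [haei i] with ω hω
    rw [Real.norm_eq_abs, abs_le]
    exact ⟨by linarith [hω.1], hω.2⟩
  -- integrability of id and the square under F
  have hid2 : MemLp (fun θ : ℝ => θ) 2 F := by
    refine MemLp.of_bound measurable_id.aestronglyMeasurable thi ?_
    filter_upwards [hsupp] with θ hθ
    rw [Real.norm_eq_abs, abs_le]
    exact ⟨by linarith [hθ.1, hθ.2], hθ.2⟩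
  -- EF ∈ [tlo, thi]
  have hidint : Integrable (fun θ : ℝ => θ) F := hid2.integrable one_le_two
  have hEF1 : tlo ≤ EF := by
    have h := integral_mono_ae (μ := F) (integrable_const tlo) hidint
      (by filter_upwards [hsupp] with θ hθ using hθ.1)
    simpa using h
  have hEF2 : EF ≤ thi := by
    have h := integral_mono_ae (μ := F) hidint (integrable_const thi)
      (by filter_upwards [hsupp] with θ hθ using hθ.2)
    simpa using h
  -- expectation of coordinates
  have hEX : ∀ i, ∫ ω, X i ω ∂μ = EF := fun i =>
    integral_eval n i (fun θ => θ) hidint.aestronglyMeasurable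
  have hESum : μ[∑ i, X i] = n * EF := by
    rw [hsum]
    have : ∫ ω, ∑ i, ω i ∂μ = ∑ i : Fin n, ∫ ω, ω i ∂μ :=
      integral_finset_sum _ fun i _ => (hmemX i).integrable one_le_two
    rw [this]
    rw [Finset.sum_congr rfl fun i _ => hEX i]
    simp [Finset.sum_const, mul_comm]
  -- variance bound per coordinate
  have hvar1 : ∀ i, variance (X i) μ ≤ (thi - tlo)^2 := by
    intro i
    rw [variance_eq_integral (hmemX i).aemeasurable, hEX i,
      ← show μ[(X i - fun _ => EF :) ^ (2:ℕ)] = ∫ ω, (X i ω - EF)^2 ∂μ from rfl]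
    have heq : ((X i - fun _ => EF :) ^ (2:ℕ))
        = fun ω : Fin n → ℝ => (fun θ => (θ - EF)^2) (ω i) := by
      funext ω; simp [hX]
    have h1 : μ[(X i - fun _ => EF :) ^ (2:ℕ)] = ∫ θ, (θ - EF)^2 ∂F := by
      rw [heq]
      exact integral_eval n i (fun θ => (θ - EF)^2)
        ((continuous_id.sub continuous_const).pow 2).aestronglyMeasurable
    rw [h1]
    have hint : Integrable (fun θ => (θ - EF)^2) F := by
      have h4 := (hid2.sub (memLp_const EF)).integrable_sq
      exact h4.congr (by filter_upwards with θ; simp)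
    have h2 := integral_mono_ae (μ := F) hint (integrable_const ((thi - tlo)^2))
      (by filter_upwards [hsupp] with θ hθ
          exact sq_le_sq' (by linarith [hθ.1]) (by linarith [hθ.2]))
    simpa using h2
  have hvar : variance (∑ i, X i) μ ≤ n * (thi - tlo)^2 := by
    rw [IndepFun.variance_sum (fun i _ => hmemX i)
      (fun i _ j _ hij => (iIndep_eval n).indepFun hij)]
    calc ∑ i : Fin n, variance (X i) μ ≤ ∑ _i : Fin n, (thi - tlo)^2 :=
      Finset.sum_le_sum fun i _ => hvar1 i
    _ = n * (thi - tlo)^2 := by simp [mul_comm]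
  -- Chebyshev
  set c : ℝ := n * EF - x with hcdef
  have hc : 0 < c := by simp [hcdef]; linarith
  have hmemS : MemLp (∑ i : Fin n, X i) 2 μ :=
    memLp_finset_sum' Finset.univ fun i _ => hmemX i
  have hcheb := meas_ge_le_variance_div_sq (X := ∑ i : Fin n, X i) hmemS hc
  have hsubset : (fun ω : Fin n → ℝ => ∑ i, ω i) ⁻¹' Iic x
      ⊆ {ω | c ≤ |(∑ i, X i) ω - μ[∑ i, X i]|} := by
    intro ω (hω : ∑ i, ω i ≤ x)
    rw [Set.mem_setOf_eq, hESum, hsum]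
    refine le_abs.2 (Or.inr ?_)
    simp only [neg_sub]
    linarith
  have hmap : ((μ.map (fun ω => ∑ i, ω i)) (Iic x))
      ≤ ENNReal.ofReal (variance (∑ i, X i) μ / c^2) := by
    rw [Measure.map_apply hS measurableSet_Iic]
    exact le_trans (measure_mono hsubset) hcheb
  have h0 : 0 ≤ variance (∑ i, X i) μ / c^2 := div_nonneg (variance_nonneg _ _) (sq_nonneg c)
  refine le_trans (ENNReal.toReal_le_of_le_ofReal h0 hmap) ?_
  gcongr


end Aux

set_option maxHeartbeats 1000000 in
theorem convolution_cdf_vanishes_for_large_N (tlo thi : ℝ) (htlo : 0 ≤ tlo) (hlt : tlo < thi)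
    (F : Measure ℝ) [IsProbabilityMeasure F]
    (hsupp : ∀ᵐ θ ∂F, θ ∈ Icc tlo thi)
    (EF : ℝ) (hEF : EF = ∫ θ, θ ∂F)
    (ctilde : ℕ → ℝ)
    (hlimsup_lo : tlo < Filter.limsup ctilde Filter.atTop)
    (hlimsup_hi : Filter.limsup ctilde Filter.atTop < EF)
    (Fconv : ℕ → ℝ → ℝ)
    (hFconv : ∀ N : ℕ, ∀ x : ℝ, Fconv N x =
      (((Measure.pi (fun _ : Fin (N - 1) => F)).map (fun ω => ∑ i, ω i)) (Iic x)).toReal) :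
    ∀ ε : ℝ, 0 < ε → ∃ N₀ : ℕ, ∀ N ≥ N₀,
      (∀ θ ∈ Icc tlo thi,
          Fconv N (N * ctilde N - θ) ≤ Fconv N (N * ctilde N - tlo)) ∧
      Fconv N (N * ctilde N - tlo) < ε := by
  intro ε hε
  have hbdd : IsBoundedUnder (· ≤ ·) atTop ctilde := by
    by_contra h
    have hempty : {a | ∀ᶠ n in atTop, ctilde n ≤ a} = ∅ := by
      ext a
      simp only [Set.mem_setOf_eq, Set.mem_empty_iff_false, iff_false]
      intro ha
      exact h ⟨a, by simpa [Filter.eventually_map] using ha⟩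
    rw [Filter.limsup_eq, hempty, Real.sInf_empty] at hlimsup_lo
    linarith
  set L := Filter.limsup ctilde Filter.atTop with hL
  set r : ℝ := (L + EF)/2 with hr
  have hLr : L < r := by rw [hr]; linarith
  have hrEF : r < EF := by rw [hr]; linarith
  have hr0 : 0 < r := by linarith
  set δ : ℝ := EF - r with hδ
  have hδ0 : 0 < δ := by rw [hδ]; linarith
  set V : ℝ := (thi - tlo)^2 with hV
  have hV0 : 0 ≤ V := sq_nonneg _
  have hev : ∀ᶠ N in atTop, ctilde N < r := eventually_lt_of_limsup_lt hLr hbdd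
  obtain ⟨M, hM⟩ := Filter.eventually_atTop.1 hev
  obtain ⟨K, hK⟩ := exists_nat_gt (max (2*r/δ) (4*V/(δ^2*ε)))
  refine ⟨max M (K + 2), fun N hN => ?_⟩
  have hNM : M ≤ N := le_trans (le_max_left _ _) hN
  have hNK : K + 2 ≤ N := le_trans (le_max_right _ _) hN
  obtain ⟨n, rfl⟩ : ∃ n, N = n + 1 := ⟨N - 1, by omega⟩
  -- monotonicity
  have hS : Measurable (fun ω : Fin (n + 1 - 1) → ℝ => ∑ i, ω i) :=
    Finset.measurable_sum _ fun i _ => measurable_pi_apply i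
  haveI hprob : IsProbabilityMeasure
      ((Measure.pi (fun _ : Fin (n + 1 - 1) => F)).map (fun ω => ∑ i, ω i)) :=
    Measure.isProbabilityMeasure_map hS.aemeasurable
  have hmono : ∀ a b : ℝ, a ≤ b → Fconv (n+1) a ≤ Fconv (n+1) b := by
    intro a b hab
    rw [hFconv, hFconv]
    exact ENNReal.toReal_mono (measure_ne_top _ _) (measure_mono (Iic_subset_Iic.2 hab))
  refine ⟨fun θ hθ => hmono _ _ (by linarith [hθ.1]), ?_⟩
  -- quantitative bound
  have hn1 : (1:ℝ) ≤ (n:ℝ) := by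
    have : 1 ≤ n := by omega
    exact_mod_cast this
  have hKn : (K:ℝ) ≤ (n:ℝ) := by
    have : K ≤ n := by omega
    exact_mod_cast this
  have h1 : 2*r/δ < (n:ℝ) := lt_of_lt_of_le (lt_of_le_of_lt (le_max_left _ _) hK) hKn
  have h2 : 4*V/(δ^2*ε) < (n:ℝ) := lt_of_lt_of_le (lt_of_le_of_lt (le_max_right _ _) hK) hKn
  have h2r : 2*r < (n:ℝ)*δ := by
    have := (div_lt_iff₀ hδ0).1 h1
    linarith
  set x : ℝ := ((n:ℕ)+1 : ℕ) * ctilde (n+1) - tlo with hx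
  have hc : ctilde (n+1) < r := hM _ hNM
  have e1 : x ≤ ((n:ℝ)+1) * r := by
    rw [hx]
    push_cast
    have hmul : ((n:ℝ)+1) * ctilde (n+1) ≤ ((n:ℝ)+1) * r :=
      mul_le_mul_of_nonneg_left hc.le (by linarith)
    linarith
  have hid : (n:ℝ)*δ = (n:ℝ)*EF - (n:ℝ)*r := by rw [hδ]; ring
  have key : (n:ℝ)*δ/2 ≤ (n:ℝ)*EF - x := by linarith
  have hnδ : 0 < (n:ℝ)*δ := mul_pos (by linarith) hδ0
  have hx_lt : x < (n:ℝ) * EF := by linarith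
  have hb := conv_tail_bound (F := F) tlo thi htlo hlt.le hsupp n x
    (by rw [← hEF]; exact hx_lt)
  rw [← hEF] at hb
  have hgoal_eq : Fconv (n+1) (((n:ℕ)+1 : ℕ) * ctilde (n+1) - tlo)
      = (((Measure.pi (fun _ : Fin n => F)).map (fun ω => ∑ i, ω i)) (Iic x)).toReal := by
    rw [hFconv]
    simp only [Nat.add_sub_cancel, ← hx]
    rfl
  rw [hgoal_eq]
  have hn0 : (n:ℝ) ≠ 0 := by linarith
  have hδ' : δ ≠ 0 := ne_of_gt hδ0
  calc (((Measure.pi (fun _ : Fin n => F)).map (fun ω => ∑ i, ω i)) (Iic x)).toReal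
      ≤ (n:ℝ) * V / ((n:ℝ) * EF - x)^2 := hb
    _ ≤ (n:ℝ) * V / ((n:ℝ)*δ/2)^2 := by
        apply div_le_div_of_nonneg_left ?_ ?_ ?_
        · positivity
        · positivity
        · exact pow_le_pow_left₀ (by positivity) key 2
    _ = 4*V/((n:ℝ)*δ^2) := by field_simp; ring
    _ < ε := by
        rw [div_lt_iff₀ (by positivity)]
        have h3 : 4*V < (n:ℝ)*(δ^2*ε) := by
          have := (div_lt_iff₀ (by positivity : (0:ℝ) < δ^2*ε)).1 h2
          linarith
        nlinarith
end

section
/- Let u : [1, λ̂] → ℝ be continuous, non-decreasing and concave with u' bounded. Suppose u satisfies the timeline-C individual rationality constraint [(Γ^B(λ) - Γ^C(λ))/M]·u'(λ) - u(λ) ≥ 0 for a.e. λ ∈ [1, λ̂], where Γ^B(λ) - Γ^C(λ) = ((λ-1)/(1+λ))·(λM - m) with m > M·λ̂ > 0. Then u(1) ≤ 0; moreover, if u is not identically constant (i.e., u' > 0 on a set of positive measure near 1), then u(1) < 0. -/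
open Set MeasureTheory

theorem timelineC_subsidy_negative (m M lamHat : ℝ)
    (hM : 0 < M) (hlamHat1 : 1 < lamHat) (hlamHat2 : lamHat ≤ 2)
    (hm : M * lamHat < m)
    (GammaB GammaC : ℝ → ℝ)
    (hGB : ∀ lam, GammaB lam = (2 * m + (1 - lam) * M) / (1 + lam))
    (hGC : ∀ lam, GammaC lam = m + (1 - lam) * M)
    (u u' : ℝ → ℝ)
    (hu_cont : ContinuousOn u (Icc 1 lamHat))
    (hu_mono : MonotoneOn u (Icc 1 lamHat))
    (hu_conc : ConcaveOn ℝ (Icc 1 lamHat) u)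
    (hu_deriv : ∀ lam ∈ Ioo (1:ℝ) lamHat, HasDerivAt u (u' lam) lam)
    (hu'_bd : ∃ C : ℝ, ∀ lam ∈ Ioo (1:ℝ) lamHat, |u' lam| ≤ C)
    (hu'_nonneg : ∀ lam ∈ Ioo (1:ℝ) lamHat, 0 ≤ u' lam)
    (hIR : ∀ᵐ lam ∂(MeasureTheory.volume.restrict (Icc (1:ℝ) lamHat)),
      0 ≤ ((GammaB lam - GammaC lam) / M) * u' lam - u lam) :
    u 1 ≤ 0 ∧
      ((∀ ε : ℝ, 0 < ε →
          0 < MeasureTheory.volume {lam ∈ Ioo (1:ℝ) (min (1 + ε) lamHat) | 0 < u' lam})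
        → u 1 < 0) := by
  set μ := MeasureTheory.volume.restrict (Icc (1:ℝ) lamHat) with hμ
  -- coefficient is nonpositive on Ioo
  have hc : ∀ lam ∈ Ioo (1:ℝ) lamHat, (GammaB lam - GammaC lam) / M ≤ 0 := by
    rintro lam ⟨h1, h2⟩
    rw [hGB, hGC]
    have h1p : (0:ℝ) < 1 + lam := by linarith
    have hmlam : lam * M < m := by nlinarith
    have hnum : (2 * m + (1 - lam) * M) / (1 + lam) - (m + (1 - lam) * M) ≤ 0 := by
      rw [sub_nonpos, div_le_iff₀ h1p]
      nlinarith
    exact div_nonpos_of_nonpos_of_nonneg hnum hM.le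
  -- endpoints are null
  have hne1 : ∀ᵐ lam ∂μ, lam ≠ 1 := by
    refine (ae_iff).2 ?_
    have : μ {x : ℝ | ¬ x ≠ 1} = μ {(1:ℝ)} := by congr 1; ext x; simp
    rw [this]
    exact le_antisymm ((Measure.restrict_le_self _).trans_eq Real.volume_singleton) zero_le
  have hne2 : ∀ᵐ lam ∂μ, lam ≠ lamHat := by
    refine (ae_iff).2 ?_
    have : μ {x : ℝ | ¬ x ≠ lamHat} = μ {lamHat} := by congr 1; ext x; simp
    rw [this]
    exact le_antisymm ((Measure.restrict_le_self _).trans_eq Real.volume_singleton) zero_le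
  have hB : ∀ᵐ lam ∂μ, lam ∈ Ioo (1:ℝ) lamHat := by
    filter_upwards [ae_restrict_mem measurableSet_Icc, hne1, hne2] with lam hIcc h1 h2
    exact ⟨lt_of_le_of_ne hIcc.1 (Ne.symm h1), lt_of_le_of_ne hIcc.2 h2⟩
  have hC : ∀ᵐ lam ∂μ, u lam ≤ 0 ∧ lam ∈ Ioo (1:ℝ) lamHat := by
    filter_upwards [hIR, hB] with lam hlam hIoo
    refine ⟨?_, hIoo⟩
    have h1 : u lam ≤ ((GammaB lam - GammaC lam) / M) * u' lam := by linarith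
    have h2 : ((GammaB lam - GammaC lam) / M) * u' lam ≤ 0 :=
      mul_nonpos_of_nonpos_of_nonneg (hc lam hIoo) (hu'_nonneg lam hIoo)
    linarith
  have hμne : μ ≠ 0 := by
    intro h
    have h1 : μ univ = 0 := by rw [h]; rfl
    rw [Measure.restrict_apply_univ, Real.volume_Icc] at h1
    have : lamHat - 1 ≤ 0 := by
      by_contra hcon
      push_neg at hcon
      rw [ENNReal.ofReal_eq_zero] at h1
      linarith
    linarith
  have : (MeasureTheory.ae μ).NeBot := ae_neBot.2 hμne
  obtain ⟨lam0, hlu, hlIoo⟩ := hC.exists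
  have hu1 : u 1 ≤ 0 := by
    have := hu_mono (left_mem_Icc.2 hlamHat1.le) ⟨hlIoo.1.le, hlIoo.2.le⟩ hlIoo.1.le
    linarith
  refine ⟨hu1, ?_⟩
  intro hP
  by_contra hcon
  push_neg at hcon
  have hu1eq : u 1 = 0 := le_antisymm hu1 hcon
  -- u vanishes on Ioo
  have hzero : ∀ lam ∈ Ioo (1:ℝ) lamHat, u lam = 0 := by
    rintro l0 ⟨ha, hb⟩
    have hge : 0 ≤ u l0 := by
      have := hu_mono (left_mem_Icc.2 hlamHat1.le) ⟨ha.le, hb.le⟩ ha.le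
      linarith
    rcases eq_or_lt_of_le hge with h | h
    · exact h.symm
    exfalso
    have hN : μ {lam | ¬ u lam ≤ 0} = 0 := by
      have := hC.mono (fun lam h => h.1)
      exact (ae_iff).1 this
    have hsub : Ioo l0 lamHat ⊆ {lam | ¬ u lam ≤ 0} := by
      rintro x ⟨hx1, hx2⟩
      have : u l0 ≤ u x := hu_mono ⟨ha.le, hb.le⟩ ⟨(ha.trans hx1).le, hx2.le⟩ hx1.le
      simp only [mem_setOf_eq, not_le]
      linarith
    have h1 : μ (Ioo l0 lamHat) ≤ 0 := hN ▸ measure_mono hsub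
    have h2 : μ (Ioo l0 lamHat) = MeasureTheory.volume (Ioo l0 lamHat) := by
      rw [hμ, Measure.restrict_apply measurableSet_Ioo, inter_eq_left.2]
      rintro x ⟨hx1, hx2⟩
      exact ⟨(ha.trans hx1).le, hx2.le⟩
    rw [h2, Real.volume_Ioo] at h1
    have : lamHat - l0 ≤ 0 := by
      by_contra hc2
      push_neg at hc2
      have := le_antisymm h1 zero_le
      rw [ENNReal.ofReal_eq_zero] at this
      linarith
    linarith
  -- hence u' vanishes on Ioo
  have hderiv0 : ∀ lam ∈ Ioo (1:ℝ) lamHat, u' lam = 0 := by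
    intro lam hlam
    have heq : u =ᶠ[nhds lam] fun _ => (0:ℝ) :=
      Filter.eventually_of_mem (isOpen_Ioo.mem_nhds hlam) (fun x hx => hzero x hx)
    have h0 : HasDerivAt u 0 lam := (hasDerivAt_const lam (0:ℝ)).congr_of_eventuallyEq heq
    exact (hu_deriv lam hlam).unique h0
  have hP1 := hP 1 one_pos
  have hempty : {lam ∈ Ioo (1:ℝ) (min (1 + 1) lamHat) | 0 < u' lam} = ∅ := by
    ext x
    simp only [mem_setOf_eq, mem_empty_iff_false, iff_false, not_and]
    rintro ⟨hx1, hx2⟩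
    have hxIoo : x ∈ Ioo (1:ℝ) lamHat := ⟨hx1, lt_of_lt_of_le hx2 (min_le_right _ _)⟩
    rw [hderiv0 x hxIoo]
    exact lt_irrefl 0
  rw [hempty] at hP1
  simp at hP1
end
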